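/- Let D be a division ring, A : Matrix m n D with m, n finite, and k < |n|. Suppose there are injections S : Fin k ↪ m and T : Fin k ↪ n such that the k×k submatrix A.submatrix S T is invertible, while every (k+1)×(k+1) square submatrix of A is not invertible. Then the columns of A are right linearly dependent: there exists λ : n → D with λ ≠ 0 and mulVec A λ = 0 (i.e. ∑ j, A i j * λ j = 0 for every i). -/

import Mathlib

open Matrix

def auxZero21Inv {m n α : Type*} [Fintype m] [Fintype n] [DecidableEq m] [DecidableEq n]
    [Ring α] (A : Matrix m m α) (B : Matrix m n α) (D : Matrix n n α)
    [Invertible A] [Invertible D] : Invertible (Matrix.fromBlocks A B 0 D) where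
  invOf := Matrix.fromBlocks (⅟A) (-(⅟A * B * ⅟D)) 0 (⅟D)
  invOf_mul_self := by
    simp_rw [fromBlocks_multiply, Matrix.mul_zero, Matrix.zero_mul, zero_add, add_zero,
      Matrix.neg_mul, invOf_mul_self, Matrix.invOf_mul_cancel_right, add_neg_cancel,
      fromBlocks_one]
  mul_invOf_self := by
    simp_rw [fromBlocks_multiply, Matrix.mul_zero, Matrix.zero_mul, zero_add, add_zero,
      Matrix.mul_neg, mul_invOf_self, Matrix.mul_assoc, Matrix.mul_invOf_cancel_left,
      neg_add_cancel, fromBlocks_one]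

def auxZero12Inv {m n α : Type*} [Fintype m] [Fintype n] [DecidableEq m] [DecidableEq n]
    [Ring α] (A : Matrix m m α) (C : Matrix n m α) (D : Matrix n n α)
    [Invertible A] [Invertible D] : Invertible (Matrix.fromBlocks A 0 C D) where
  invOf := Matrix.fromBlocks (⅟A) 0 (-(⅟D * C * ⅟A)) (⅟D)
  invOf_mul_self := by
    simp_rw [fromBlocks_multiply, Matrix.mul_zero, Matrix.zero_mul, zero_add, add_zero,
      Matrix.neg_mul, invOf_mul_self, Matrix.invOf_mul_cancel_right, neg_add_cancel,
      fromBlocks_one]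
  mul_invOf_self := by
    simp_rw [fromBlocks_multiply, Matrix.mul_zero, Matrix.zero_mul, zero_add, add_zero,
      Matrix.mul_neg, mul_invOf_self, Matrix.mul_assoc, Matrix.mul_invOf_cancel_left,
      add_neg_cancel, fromBlocks_one]

/-- Noncommutative version of `Matrix.submatrixEquivInvertible`. -/
def auxSubmatrixInv {l o α : Type*} [Fintype l] [Fintype o] [DecidableEq l] [DecidableEq o]
    [Ring α] (A : Matrix l l α) (e₁ e₂ : o ≃ l) [Invertible A] :
    Invertible (A.submatrix ⇑e₁ ⇑e₂) where
  invOf := (⅟A).submatrix ⇑e₂ ⇑e₁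
  invOf_mul_self := by
    rw [Matrix.submatrix_mul_equiv, invOf_mul_self, Matrix.submatrix_one_equiv]
  mul_invOf_self := by
    rw [Matrix.submatrix_mul_equiv, mul_invOf_self, Matrix.submatrix_one_equiv]

theorem stmt_4 {D : Type*} [DivisionRing D] {m n : Type*} [Fintype m] [Fintype n]
    (A : Matrix m n D) (k : ℕ) (hkn : k < Fintype.card n)
    (S : Fin k ↪ m) (T : Fin k ↪ n)
    (hminor : IsUnit (A.submatrix ⇑S ⇑T))
    (hmax : ∀ (S' : Fin (k + 1) ↪ m) (T' : Fin (k + 1) ↪ n),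
      ¬ IsUnit (A.submatrix ⇑S' ⇑T')) :
    ∃ l : n → D, l ≠ 0 ∧ A.mulVec l = 0 := by
  classical
  -- pick a column outside the range of T
  obtain ⟨j₀, hj₀⟩ : ∃ j₀, ∀ t, T t ≠ j₀ := by
    by_contra h
    push_neg at h
    have : Function.Surjective T := fun j => (h j).imp (fun t ht => ht)
    have := Fintype.card_le_of_surjective T this
    simp only [Fintype.card_fin] at this
    omega
  set B : Matrix (Fin k) (Fin k) D := A.submatrix ⇑S ⇑T with hB
  obtain ⟨hBinv⟩ := hminor.nonempty_invertible
  haveI := hBinv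
  set c : Fin k → D := fun s => A (S s) j₀ with hc
  set μ : Fin k → D := (⅟B).mulVec c with hμ
  have hBμ : B.mulVec μ = c := by
    rw [hμ, mulVec_mulVec, mul_invOf_self, one_mulVec]
  -- key claim
  have key : ∀ i : m, ∑ t, A i (T t) * μ t = A i j₀ := by
    intro i
    by_cases hi : ∃ s, S s = i
    · obtain ⟨s, rfl⟩ := hi
      have := congrFun hBμ s
      simpa [mulVec, dotProduct, hB, hc] using this
    · push_neg at hi
      by_contra he
      set e : D := (∑ t, A i (T t) * μ t) - A i j₀ with hedef
      have he' : e ≠ 0 := sub_ne_zero.mpr he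
      -- build the (k+1)×(k+1) submatrix as a block matrix
      set g : Fin k ⊕ Fin 1 → m := Sum.elim ⇑S (fun _ => i) with hg
      set h : Fin k ⊕ Fin 1 → n := Sum.elim ⇑T (fun _ => j₀) with hh
      have hginj : Function.Injective g := by
        rintro (a | a) (b | b) hab
        · exact congrArg Sum.inl (S.injective hab)
        · exact absurd hab (hi a)
        · exact absurd hab.symm (hi b)
        · exact congrArg Sum.inr (Subsingleton.elim a b)
      have hhinj : Function.Injective h := by
        rintro (a | a) (b | b) hab
        · exact congrArg Sum.inl (T.injective hab)
        · exact absurd hab (hj₀ a)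
        · exact absurd hab.symm (hj₀ b)
        · exact congrArg Sum.inr (Subsingleton.elim a b)
      set P : Matrix (Fin k ⊕ Fin 1) (Fin k ⊕ Fin 1) D := A.submatrix g h with hP
      -- block decomposition of P
      have hPblocks : P = fromBlocks B (fun s _ => A (S s) j₀) (fun _ t => A i (T t))
          (fun _ _ => A i j₀) := by
        ext (a | a) (b | b) <;> rfl
      set E : Matrix (Fin k ⊕ Fin 1) (Fin k ⊕ Fin 1) D :=
        fromBlocks 1 (fun t _ => μ t) 0 (-1) with hE
      have hPE : P * E = fromBlocks B 0 (fun _ t => A i (T t)) (fun _ _ => e) := by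
        rw [hPblocks, hE]; erw [fromBlocks_multiply]; erw [fromBlocks_inj]
        refine ⟨by erw [Matrix.mul_one, Matrix.mul_zero, add_zero], ?_,
          by erw [Matrix.mul_one, Matrix.mul_zero, add_zero], ?_⟩
        · ext s b
          have hrow := congrFun hBμ s
          simp only [mulVec, dotProduct, hc] at hrow
          erw [Matrix.add_apply, Matrix.mul_apply, Matrix.mul_apply]
          simp [Matrix.mul_apply, Matrix.neg_apply, hrow, Fin.fin_one_eq_zero b]
        · ext a b
          erw [Matrix.add_apply, Matrix.mul_apply, Matrix.mul_apply]
          simp [Matrix.mul_apply, Matrix.neg_apply, Matrix.one_apply, hedef, sub_eq_add_neg, Fin.fin_one_eq_zero b]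
      -- invertibility
      haveI hI1 : Invertible (1 : Matrix (Fin 1) (Fin 1) D) := invertibleOne
      haveI hIk : Invertible (1 : Matrix (Fin k) (Fin k) D) := invertibleOne
      haveI hIneg : Invertible (-1 : Matrix (Fin 1) (Fin 1) D) := invertibleNeg 1
      haveI hEinv : Invertible E := by
        rw [hE]; exact auxZero21Inv 1 _ (-1)
      haveI hIe : @Invertible (Matrix (Fin 1) (Fin 1) D) _ _ (fun _ _ => e) :=
        ⟨(fun _ _ => e⁻¹),
          by ext a b; erw [Matrix.mul_apply]; simp [Matrix.mul_apply, Matrix.one_apply, Subsingleton.elim a b,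
            inv_mul_cancel₀ he'],
          by ext a b; erw [Matrix.mul_apply]; simp [Matrix.mul_apply, Matrix.one_apply, Subsingleton.elim a b,
            mul_inv_cancel₀ he']⟩
      haveI hPEinv : Invertible (P * E) := by
        rw [hPE]
        exact @auxZero12Inv (Fin k) (Fin 1) D _ _ _ _ _ B (fun _ t => A i (T t))
          (fun _ _ => e) hBinv hIe
      haveI hPinv : Invertible P := by
        have : P = (P * E) * ⅟E := by rw [mul_assoc, mul_invOf_self, mul_one]
        rw [this]; exact invertibleMul _ _
      -- transfer along the equivalence Fin k ⊕ Fin 1 ≃ Fin (k+1)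
      set eqv : Fin k ⊕ Fin 1 ≃ Fin (k + 1) := finSumFinEquiv with heqv
      refine hmax ⟨g ∘ eqv.symm, hginj.comp eqv.symm.injective⟩
        ⟨h ∘ eqv.symm, hhinj.comp eqv.symm.injective⟩ ?_
      haveI := auxSubmatrixInv P eqv.symm eqv.symm
      exact isUnit_of_invertible (P.submatrix ⇑eqv.symm ⇑eqv.symm)
  -- construct the dependency vector
  set l : n → D := fun j =>
    (∑ t, if j = T t then μ t else 0) - (if j = j₀ then 1 else 0) with hl
  have hlj₀ : l j₀ = -1 := by
    have hsum : (∑ t, if j₀ = T t then μ t else 0) = 0 :=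
      Finset.sum_eq_zero fun t _ => if_neg (fun hh => hj₀ t hh.symm)
    simp only [hl, hsum]
    simp
  refine ⟨l, ?_, ?_⟩
  · intro h0
    have := congrFun h0 j₀
    rw [hlj₀] at this
    simp at this
  · ext i
    simp only [mulVec, dotProduct, Pi.zero_apply, hl]
    have h1 : ∑ j, A i j * ((∑ t, if j = T t then μ t else 0) - (if j = j₀ then 1 else 0))
        = (∑ j, ∑ t, A i j * (if j = T t then μ t else 0))
          - ∑ j, A i j * (if j = j₀ then 1 else 0) := by
      rw [← Finset.sum_sub_distrib]
      congr 1; ext j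
      rw [mul_sub, Finset.mul_sum]
    rw [h1, Finset.sum_comm]
    have h2 : ∀ t : Fin k, ∑ j, A i j * (if j = T t then μ t else 0) = A i (T t) * μ t := by
      intro t
      rw [Finset.sum_eq_single (T t)]
      · rw [if_pos rfl]
      · intro j _ hj; rw [if_neg hj, mul_zero]
      · intro hj; exact absurd (Finset.mem_univ _) hj
    have h3 : ∑ j, A i j * (if j = j₀ then 1 else 0) = A i j₀ := by
      rw [Finset.sum_eq_single j₀]
      · rw [if_pos rfl, mul_one]
      · intro j _ hj; rw [if_neg hj, mul_zero]
      · intro hj; exact absurd (Finset.mem_univ _) hj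
    rw [Finset.sum_congr rfl (fun t _ => h2 t), h3, key i, sub_self]
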